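/- Let X, Y ⊆ ℤ₂^α × ℤ₄^β be ℤ₂ℤ₄-additive codes of types (α,β;γ',δ') and (α,β;γ'',δ''), with minimum Lee distances 2^{m−r−1} and 2^{m−r} respectively and binary lengths α+2β = 2^{m−1}. Then the Plotkin construction C = {(u,u+v): u∈X, v∈Y} is of type (2α,2β;γ'+γ'',δ'+δ''), has binary length 2^m, and minimum Lee distance exactly 2^{m−r}. -/

import Mathlib

open Finset

/-- The Gray map `φ : ℤ₄ → ℤ₂²`. -/
def grayMap (x : ZMod 4) : ZMod 2 × ZMod 2 :=
  if x = 0 then (0, 0) else if x = 1 then (0, 1) else if x = 2 then (1, 1) else (1, 0)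

/-- Lee weight on `ℤ₄`: `wL(0)=0, wL(1)=1, wL(2)=2, wL(3)=1`. -/
def leeWt4 (x : ZMod 4) : ℕ := min x.val (4 - x.val)

/-- Hamming distance on `ℤ₂²`. -/
def hamDist2 (x y : ZMod 2 × ZMod 2) : ℕ :=
  (if x.1 = y.1 then 0 else 1) + (if x.2 = y.2 then 0 else 1)

/-- The ambient space `ℤ₂^a × ℤ₄^b`. -/
abbrev Vec (a b : ℕ) := (Fin a → ZMod 2) × (Fin b → ZMod 4)

/-- Hamming weight of a binary vector. -/
def wtH {n : ℕ} (f : Fin n → ZMod 2) : ℕ := (univ.filter fun i => f i ≠ 0).card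

/-- Lee weight on `ℤ₂^a × ℤ₄^b`. -/
def leeWt {a b : ℕ} (w : Vec a b) : ℕ := wtH w.1 + ∑ j, leeWt4 (w.2 j)

/-- Lee distance on `ℤ₂^a × ℤ₄^b`. -/
def leeDist {a b : ℕ} (x y : Vec a b) : ℕ := leeWt (x - y)

/-- Minimum Lee distance (= minimum Lee weight of a nonzero element) of a set. -/
noncomputable def minLee {a b : ℕ} (S : Set (Vec a b)) : ℕ := sInf (leeWt '' (S \ {0}))

/-- Minimum Hamming distance of a (not necessarily linear) binary code. -/
noncomputable def minHam {n : ℕ} (S : Set (Fin n → ZMod 2)) : ℕ :=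
  sInf {d | ∃ x ∈ S, ∃ y ∈ S, x ≠ y ∧ hammingDist x y = d}

/-- The extended Gray map `Φ : ℤ₂^a × ℤ₄^b → ℤ₂^(a+2b)`. -/
def Phi {a b : ℕ} (x : Vec a b) : Fin (a + 2 * b) → ZMod 2 :=
  fun i =>
    if h : (i : ℕ) < a then x.1 ⟨i, h⟩
    else
      have hb : ((i : ℕ) - a) / 2 < b := by have := i.isLt; omega
      if ((i : ℕ) - a) % 2 = 0 then (grayMap (x.2 ⟨((i : ℕ) - a) / 2, hb⟩)).1
      else (grayMap (x.2 ⟨((i : ℕ) - a) / 2, hb⟩)).2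

/-- The Plotkin vector `(u , u + v)` in `ℤ₂^(2a) × ℤ₄^(2b)`. -/
def plVec {a b : ℕ} (u v : Vec a b) : Vec (a + a) (b + b) :=
  (Fin.append u.1 (u.1 + v.1), Fin.append u.2 (u.2 + v.2))

/-- The Plotkin construction `{(u, u+v) : u ∈ X, v ∈ Y}`. -/
def plotkinSet {a b : ℕ} (X Y : Set (Vec a b)) : Set (Vec (a + a) (b + b)) :=
  {w | ∃ u ∈ X, ∃ v ∈ Y, w = plVec u v}


section Aux

lemma leeWt4_add_le : ∀ x y : ZMod 4, leeWt4 (x + y) ≤ leeWt4 x + leeWt4 y := by decide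

lemma leeWt4_neg : ∀ x : ZMod 4, leeWt4 (-x) = leeWt4 x := by decide

lemma wtH_eq_sum {n : ℕ} (f : Fin n → ZMod 2) :
    wtH f = ∑ i, (if f i = 0 then 0 else 1) := by
  rw [wtH, Finset.card_filter]
  exact Finset.sum_congr rfl fun i _ => by by_cases h : f i = 0 <;> simp [h]

lemma leeWt_add_le {a b : ℕ} (x y : Vec a b) : leeWt (x + y) ≤ leeWt x + leeWt y := by
  unfold leeWt
  have h1 : wtH (x + y).1 ≤ wtH x.1 + wtH y.1 := by
    rw [wtH_eq_sum, wtH_eq_sum, wtH_eq_sum, ← Finset.sum_add_distrib]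
    refine Finset.sum_le_sum fun i _ => ?_
    have : ∀ u v : ZMod 2,
        (if u + v = 0 then 0 else 1) ≤ (if u = 0 then 0 else 1) + (if v = 0 then 0 else 1) := by
      decide
    exact this _ _
  have h2 : ∑ j, leeWt4 ((x + y).2 j) ≤ (∑ j, leeWt4 (x.2 j)) + ∑ j, leeWt4 (y.2 j) := by
    rw [← Finset.sum_add_distrib]
    exact Finset.sum_le_sum fun j _ => leeWt4_add_le _ _
  omega

lemma leeWt_neg {a b : ℕ} (x : Vec a b) : leeWt (-x) = leeWt x := by
  unfold leeWt
  have h1 : wtH (-x).1 = wtH x.1 := by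
    rw [wtH_eq_sum, wtH_eq_sum]
    refine Finset.sum_congr rfl fun i _ => ?_
    have key : ∀ u : ZMod 2, (if -u = 0 then (0:ℕ) else 1) = if u = 0 then 0 else 1 := by
      decide
    exact key (x.1 i)
  have h2 : ∀ j, leeWt4 ((-x).2 j) = leeWt4 (x.2 j) := fun j => leeWt4_neg _
  rw [h1]
  exact congrArg _ (Finset.sum_congr rfl fun j _ => h2 j)

lemma leeWt_zero {a b : ℕ} : leeWt (0 : Vec a b) = 0 := by
  simp [leeWt, wtH, leeWt4]

lemma wtH_append {a b : ℕ} (f : Fin a → ZMod 2) (g : Fin b → ZMod 2) :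
    wtH (Fin.append f g) = wtH f + wtH g := by
  rw [wtH_eq_sum, wtH_eq_sum, wtH_eq_sum, Fin.sum_univ_add]
  simp [Fin.append_left, Fin.append_right]

lemma leeWt_plVec {a b : ℕ} (u v : Vec a b) :
    leeWt (plVec u v) = leeWt u + leeWt (u + v) := by
  unfold leeWt plVec
  rw [wtH_append, Fin.sum_univ_add]
  simp only [Fin.append_left, Fin.append_right, Prod.fst_add, Prod.snd_add]
  omega

lemma append_add {n m : ℕ} {M : Type*} [AddCommGroup M]
    (f₁ f₂ : Fin n → M) (g₁ g₂ : Fin m → M) :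
    Fin.append f₁ g₁ + Fin.append f₂ g₂ = Fin.append (f₁ + f₂) (g₁ + g₂) := by
  funext i
  induction i using Fin.addCases with
  | left i => simp [Fin.append_left]
  | right i => simp [Fin.append_right]

/-- Appending as an additive equivalence. -/
def appendAddEquiv (n m : ℕ) (M : Type*) [AddCommGroup M] :
    ((Fin n → M) × (Fin m → M)) ≃+ (Fin (n + m) → M) where
  toFun p := Fin.append p.1 p.2
  invFun f := (fun i => f (Fin.castAdd m i), fun i => f (Fin.natAdd n i))
  left_inv p := by
    refine Prod.ext ?_ ?_ <;> funext i <;> simp [Fin.append_left, Fin.append_right]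
  right_inv f := by
    funext i
    induction i using Fin.addCases with
    | left i => simp [Fin.append_left]
    | right i => simp [Fin.append_right]
  map_add' p q := (append_add _ _ _ _).symm

/-- The shear `(u,v) ↦ (u, u+v)` as an additive equivalence. -/
def shearEquiv (G : Type*) [AddCommGroup G] : (G × G) ≃+ (G × G) where
  toFun p := (p.1, p.1 + p.2)
  invFun p := (p.1, p.2 - p.1)
  left_inv p := by simp
  right_inv p := by simp
  map_add' p q := by
    refine Prod.ext rfl ?_
    simp only [Prod.snd_add, Prod.fst_add]
    abel

/-- Combining two ambient spaces. -/
def vecProdEquiv (a b c d : ℕ) : (Vec a b × Vec c d) ≃+ Vec (a + c) (b + d) :=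
  (AddEquiv.prodProdProdComm _ _ _ _).trans
    (AddEquiv.prodCongr (appendAddEquiv a c (ZMod 2)) (appendAddEquiv b d (ZMod 4)))

/-- The Plotkin map as an additive equivalence. -/
def plEquiv (a b : ℕ) : (Vec a b × Vec a b) ≃+ Vec (a + a) (b + b) :=
  (shearEquiv (Vec a b)).trans (vecProdEquiv a b a b)

lemma plEquiv_apply {a b : ℕ} (u v : Vec a b) : plEquiv a b (u, v) = plVec u v := rfl

lemma plVec_eq_zero {a b : ℕ} {u v : Vec a b} (h : plVec u v = 0) : u = 0 ∧ v = 0 := by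
  have h2 : plEquiv a b (u, v) = plEquiv a b (0, 0) := by
    rw [plEquiv_apply, h]
    exact (map_zero (plEquiv a b)).symm
  have h3 := (plEquiv a b).injective h2
  exact ⟨congrArg Prod.fst h3, congrArg Prod.snd h3⟩

lemma plVec_zero {a b : ℕ} : plVec (0 : Vec a b) 0 = 0 := by
  rw [← plEquiv_apply]; exact map_zero _

end Aux

/-- Plotkin step of the `ARM` recursion. If `X, Y ⊆ ℤ₂^α × ℤ₄^β` have
types `(α,β;γ',δ')`, `(α,β;γ'',δ'')`, minimum Lee distances `2^(m−r−1)` and `2^(m−r)`,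
and binary length `α+2β = 2^(m−1)`, then the Plotkin code is of type
`(2α,2β;γ'+γ'',δ'+δ'')`, has binary length `2^m`, and minimum Lee distance `2^(m−r)`. -/
theorem plotkin_RM_step (α β γ' δ' γ'' δ'' m r : ℕ) (hr : r < m)
    (X Y : AddSubgroup (Vec α β))
    (hX : Nonempty (X ≃+ Vec γ' δ')) (hY : Nonempty (Y ≃+ Vec γ'' δ''))
    (hdX : minLee (X : Set (Vec α β)) = 2 ^ (m - r - 1))
    (hdY : minLee (Y : Set (Vec α β)) = 2 ^ (m - r))
    (hlen : α + 2 * β = 2 ^ (m - 1)) :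
    ∃ C : AddSubgroup (Vec (α + α) (β + β)),
      (C : Set (Vec (α + α) (β + β))) = plotkinSet (X : Set (Vec α β)) (Y : Set (Vec α β)) ∧
      Nonempty (C ≃+ Vec (γ' + γ'') (δ' + δ'')) ∧
      (α + α) + 2 * (β + β) = 2 ^ m ∧
      minLee (plotkinSet (X : Set (Vec α β)) (Y : Set (Vec α β))) = 2 ^ (m - r) := by
  
  classical
  set d : ℕ := 2 ^ (m - r) with hd
  have hd0 : 0 < d := Nat.pow_pos (by norm_num)
  set S := plotkinSet (X : Set (Vec α β)) (Y : Set (Vec α β)) with hS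
  -- existence of a minimum-weight word in Y
  have hTne : (leeWt '' (((Y : Set (Vec α β))) \ {0})).Nonempty := by
    by_contra h
    rw [Set.not_nonempty_iff_eq_empty] at h
    rw [minLee, h, Nat.sInf_empty] at hdY
    omega
  have hmem := Nat.sInf_mem hTne
  have hsinf : sInf (leeWt '' (((Y : Set (Vec α β))) \ {0})) = d := hdY
  rw [hsinf] at hmem
  obtain ⟨v0, hv0mem, hv0w⟩ := hmem
  obtain ⟨hv0Y, hv0ne'⟩ := hv0mem
  have hv0ne : v0 ≠ 0 := by simpa using hv0ne'
  -- the witness element in the Plotkin code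
  have hw0S : plVec 0 v0 ∈ S := ⟨0, X.zero_mem, v0, hv0Y, rfl⟩
  have hw0ne : plVec 0 v0 ≠ 0 := fun h => hv0ne (plVec_eq_zero h).2
  have hw0wt : leeWt (plVec 0 v0) = d := by
    rw [leeWt_plVec, leeWt_zero, zero_add, zero_add, hv0w]
  have hdmem : d ∈ leeWt '' (S \ {0}) := ⟨plVec 0 v0, ⟨hw0S, hw0ne⟩, hw0wt⟩
  -- lower bound
  have hlb : ∀ x ∈ leeWt '' (S \ {0}), d ≤ x := by
    rintro x ⟨w, ⟨hwS, hwne'⟩, rfl⟩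
    have hwne : w ≠ 0 := by simpa using hwne'
    obtain ⟨u, hu, v, hv, rfl⟩ := hwS
    rw [leeWt_plVec]
    by_cases hv0 : v = 0
    · subst hv0
      have hune : u ≠ 0 := fun h => hwne (by rw [h]; exact plVec_zero)
      have h1 : 2 ^ (m - r - 1) ≤ leeWt u := by
        rw [← hdX]
        exact Nat.sInf_le ⟨u, ⟨hu, hune⟩, rfl⟩
      have h2 : leeWt (u + 0) = leeWt u := by rw [add_zero]
      have h3 : d = 2 ^ (m - r - 1) + 2 ^ (m - r - 1) := by
        obtain ⟨k, hk⟩ : ∃ k, m - r = k + 1 := ⟨m - r - 1, by omega⟩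
        have hk1 : m - r - 1 = k := by omega
        rw [hd, hk1, hk, pow_succ]
        omega
      omega
    · have hvle : leeWt v ≤ leeWt u + leeWt (u + v) := by
        have hv' : v = -u + (u + v) := by abel
        calc leeWt v = leeWt (-u + (u + v)) := by rw [← hv']
          _ ≤ leeWt (-u) + leeWt (u + v) := leeWt_add_le _ _
          _ = leeWt u + leeWt (u + v) := by rw [leeWt_neg]
      have h2 : d ≤ leeWt v := by
        rw [← hdY]
        exact Nat.sInf_le ⟨v, ⟨hv, hv0⟩, rfl⟩
      omega
  have hminS : minLee S = d :=
    le_antisymm (Nat.sInf_le hdmem) (le_csInf ⟨d, hdmem⟩ hlb)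
  -- the subgroup
  refine ⟨(X.prod Y).map (plEquiv α β).toAddMonoidHom, ?_, ?_, ?_, hminS⟩
  · ext w
    simp only [AddSubgroup.coe_map, Set.mem_image, SetLike.mem_coe,
      AddSubgroup.mem_prod, plotkinSet, Set.mem_setOf_eq]
    constructor
    · rintro ⟨⟨u, v⟩, ⟨hu, hv⟩, rfl⟩
      exact ⟨u, hu, v, hv, rfl⟩
    · rintro ⟨u, hu, v, hv, rfl⟩
      exact ⟨(u, v), ⟨hu, hv⟩, rfl⟩
  · exact ⟨(((plEquiv α β).addSubgroupMap (X.prod Y)).symm.trans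
      ((AddSubgroup.prodEquiv X Y).trans
        ((AddEquiv.prodCongr hX.some hY.some).trans (vecProdEquiv γ' δ' γ'' δ''))))⟩
  · have h2 : (α + α) + 2 * (β + β) = 2 * (α + 2 * β) := by ring
    rw [h2, hlen, ← pow_succ']
    congr 1
    omega
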